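/- Let G be a non-abelian n-centralizer group. Then Z(G) has finite index in G and |G/Z(G)| < (n−1)!. -/

import Mathlib

open Subgroup
open scoped Pointwise

def centSet (G : Type*) [Group G] : Set (Subgroup G) :=
  Set.range fun x : G => Subgroup.centralizer {x}

namespace CentAux

universe u
variable {G : Type u} [Group G]

lemma top_mem : ⊤ ∈ centSet G :=
  ⟨1, by ext g; simp [Subgroup.mem_centralizer_iff]⟩

lemma cent_mem (x : G) : Subgroup.centralizer {x} ∈ centSet G := ⟨x, rfl⟩

lemma self_mem_cent (x : G) : x ∈ Subgroup.centralizer ({x} : Set G) :=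
  Subgroup.mem_centralizer_iff.2 (by rintro h rfl; rfl)

lemma cent_eq_top_iff {x : G} :
    Subgroup.centralizer ({x} : Set G) = ⊤ ↔ x ∈ Subgroup.center G := by
  rw [Subgroup.centralizer_eq_top_iff_subset, Set.singleton_subset_iff, SetLike.mem_coe]

lemma cent_mul_central {v z : G} (hz : z ∈ Subgroup.center G) :
    Subgroup.centralizer ({v * z} : Set G) = Subgroup.centralizer {v} := by
  ext y
  simp only [Subgroup.mem_centralizer_iff, Set.mem_singleton_iff, forall_eq]
  constructor
  · intro h
    have hz' := (Subgroup.mem_center_iff.1 hz) y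
    have h1 : (v * y) * z = (y * v) * z := by
      calc (v * y) * z = v * (y * z) := by rw [mul_assoc]
      _ = v * (z * y) := by rw [hz']
      _ = v * z * y := by rw [mul_assoc]
      _ = y * (v * z) := h
      _ = (y * v) * z := by rw [mul_assoc]
    exact mul_right_cancel h1
  · intro h
    have hz' := (Subgroup.mem_center_iff.1 hz) y
    calc v * z * y = v * (z * y) := by rw [mul_assoc]
    _ = v * (y * z) := by rw [← hz']
    _ = (v * y) * z := by rw [mul_assoc]
    _ = (y * v) * z := by rw [h]
    _ = y * (v * z) := by rw [mul_assoc]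

end CentAux

set_option maxHeartbeats 1000000 in
theorem main : ∀ (n : ℕ) (G : Type u) [Group G], (¬∀ a b : G, a * b = b * a) →
    (centSet G).Finite → (centSet G).ncard = n →
    (Subgroup.center G).FiniteIndex ∧
      Nat.card (G ⧸ Subgroup.center G) < (n - 1).factorial := by
  intro n
  induction n using Nat.strong_induction_on with
  | _ n ih =>
  intro G _ hG hfin hcard
  classical
  set Z := Subgroup.center G with hZdef
  set S' : Set (Subgroup G) := centSet G \ {⊤} with hS'def
  have hfinS' : S'.Finite := hfin.diff
  have htop : ⊤ ∈ centSet G := CentAux.top_mem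
  have hncardS' : S'.ncard = n - 1 := by
    rw [← hcard, hS'def]
    exact Set.ncard_diff_singleton_of_mem htop
  -- a noncentral element
  obtain ⟨a₀, b₀, hab₀⟩ : ∃ a b : G, a * b ≠ b * a := by push_neg at hG; exact hG
  have ha₀ : a₀ ∉ Z := by
    intro h
    exact hab₀ (((Subgroup.mem_center_iff.1 h) b₀).symm)
  have hCa₀ : Subgroup.centralizer ({a₀} : Set G) ∈ S' := by
    refine ⟨CentAux.cent_mem a₀, ?_⟩
    simp only [Set.mem_singleton_iff]
    exact fun h => ha₀ (CentAux.cent_eq_top_iff.1 h)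
  -- the cover
  set s : Finset (Subgroup G) := hfinS'.toFinset with hsdef
  have hmem_s : ∀ K : Subgroup G, K ∈ s ↔ K ∈ S' := by
    intro K; rw [hsdef, Set.Finite.mem_toFinset]
  have hcovers : ⋃ K ∈ s, (fun _ : Subgroup G => (1:G)) K • ((K : Subgroup G) : Set G)
      = Set.univ := by
    apply Set.eq_univ_of_forall
    intro g
    simp only [Set.mem_iUnion, one_smul, SetLike.mem_coe]
    by_cases hg : g ∈ Z
    · exact ⟨_, (hmem_s _).2 hCa₀, Subgroup.center_le_centralizer {a₀} hg⟩
    · refine ⟨Subgroup.centralizer {g}, (hmem_s _).2 ⟨CentAux.cent_mem g, ?_⟩,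
        CentAux.self_mem_cent g⟩
      simp only [Set.mem_singleton_iff]
      exact fun h => hg (CentAux.cent_eq_top_iff.1 h)
  have hscard : s.card = n - 1 := by
    rw [← hncardS', hsdef, Set.ncard_eq_toFinset_card _ hfinS']
  -- L1 : there is a proper centralizer of small index
  have hL1 : ∃ M₀, M₀ ∈ S' ∧ M₀.index ≠ 0 ∧ M₀.index ≤ n - 2 := by
    by_contra hcon
    push_neg at hcon
    have hsum := Subgroup.one_le_sum_inv_index_of_leftCoset_cover hcovers
    have hn1pos : 0 < n - 1 := by
      have h1 : (Subgroup.centralizer {a₀}) ∈ s := (hmem_s _).2 hCa₀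
      have h2 := Finset.card_pos.2 ⟨_, h1⟩
      omega
    have hterm : ∀ K ∈ s, ((K.index : ℚ))⁻¹ ≤ (((n-1 : ℕ) : ℚ))⁻¹ := by
      intro K hK
      rcases eq_or_ne K.index 0 with h0 | h0
      · rw [h0]
        simp only [Nat.cast_zero, inv_zero]
        positivity
      · have hge : n - 1 ≤ K.index := by
          have := hcon K ((hmem_s K).1 hK) h0
          omega
        have hpos : (0:ℚ) < ((n-1:ℕ):ℚ) := by exact_mod_cast hn1pos
        have hcast : ((n-1:ℕ):ℚ) ≤ (K.index : ℚ) := by exact_mod_cast hge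
        exact inv_anti₀ hpos hcast
    have hsum_le : ∑ K ∈ s, ((K.index : ℚ))⁻¹ ≤ 1 := by
      calc ∑ K ∈ s, ((K.index : ℚ))⁻¹
          ≤ ∑ _K ∈ s, (((n-1:ℕ) : ℚ))⁻¹ := Finset.sum_le_sum hterm
      _ = (s.card : ℚ) * (((n-1:ℕ):ℚ))⁻¹ := by rw [Finset.sum_const, nsmul_eq_mul]
      _ = 1 := by
          rw [hscard, mul_inv_cancel₀]
          exact_mod_cast hn1pos.ne'
    have hEq : ∑ K ∈ s, ((K.index : ℚ))⁻¹ = 1 := le_antisymm hsum_le hsum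
    have hdisj :=
      Subgroup.pairwiseDisjoint_leftCoset_cover_of_sum_inv_index_eq_one hcovers hEq
    have hcov2 := Subgroup.leftCoset_cover_filter_FiniteIndex hcovers
    obtain ⟨K₁, hK₁t, hK₁mem⟩ : ∃ K₁ ∈ s.filter (fun K : Subgroup G => K.FiniteIndex),
        (1:G) ∈ (K₁ : Set G) := by
      have h1 : (1:G) ∈ ⋃ K ∈ s.filter (fun K : Subgroup G => K.FiniteIndex),
          (fun _ : Subgroup G => (1:G)) K • ((K : Subgroup G) : Set G) := by
        rw [hcov2]; trivial
      simpa using h1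
    have hK₁S' : K₁ ∈ S' := (hmem_s K₁).1 (Finset.mem_filter.1 hK₁t).1
    have hK₁top : K₁ ≠ ⊤ := by
      intro h; exact hK₁S'.2 (by simp [h])
    obtain ⟨w, hw⟩ : ∃ w, w ∉ K₁ := by
      by_contra h
      push_neg at h
      exact hK₁top (Subgroup.eq_top_iff' K₁ |>.2 h)
    obtain ⟨K₂, hK₂t, hK₂mem⟩ : ∃ K₂ ∈ s.filter (fun K : Subgroup G => K.FiniteIndex),
        w ∈ (K₂ : Set G) := by
      have h1 : w ∈ ⋃ K ∈ s.filter (fun K : Subgroup G => K.FiniteIndex),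
          (fun _ : Subgroup G => (1:G)) K • ((K : Subgroup G) : Set G) := by
        rw [hcov2]; trivial
      simpa using h1
    have hne : K₂ ≠ K₁ := fun h => hw (h ▸ hK₂mem)
    have hd := hdisj hK₂t hK₁t hne
    have h1K₂ : (1:G) ∈ (fun _ : Subgroup G => (1:G)) K₂ • ((K₂ : Subgroup G) : Set G) := by
      simpa using K₂.one_mem
    have h1K₁ : (1:G) ∈ (fun _ : Subgroup G => (1:G)) K₁ • ((K₁ : Subgroup G) : Set G) := by
      simpa using K₁.one_mem
    exact Set.disjoint_left.1 hd h1K₂ h1K₁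
  obtain ⟨M₀, hM₀S', hM₀ne, hM₀le⟩ := hL1
  have hM₀1 : M₀.index ≠ 1 := fun h1 => hM₀S'.2 (by simp [Subgroup.index_eq_one.1 h1])
  have hM₀2 : 2 ≤ M₀.index := by omega
  have hn4 : 4 ≤ n := by omega
  -- L2 : a maximal proper centralizer above M₀
  obtain ⟨M, hMmem, hMmax'⟩ :=
    Set.Finite.exists_maximalFor id {K ∈ S' | M₀ ≤ K}
      (hfinS'.subset (fun K hK => hK.1)) ⟨M₀, hM₀S', le_refl _⟩
  have hMS' : M ∈ S' := hMmem.1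
  have hMmax : ∀ K, K ∈ S' → M ≤ K → K = M := by
    intro K hK hMK
    exact le_antisymm (hMmax' ⟨hK, hMmem.2.trans hMK⟩ hMK) hMK
  obtain ⟨x, hx⟩ : ∃ x : G, Subgroup.centralizer {x} = M := hMS'.1
  have hMtop : M ≠ ⊤ := by
    intro h; exact hMS'.2 (by simp [h])
  have hxZ : x ∉ Z := fun h => hMtop (hx ▸ CentAux.cent_eq_top_iff.2 h)
  have hMidx_ne : M.index ≠ 0 := by
    intro h0
    exact hM₀ne (Nat.eq_zero_of_zero_dvd (h0 ▸ Subgroup.index_dvd_of_le hMmem.2))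
  have hMidx_le : M.index ≤ n - 2 :=
    le_trans (Nat.le_of_dvd (Nat.pos_of_ne_zero hM₀ne) (Subgroup.index_dvd_of_le hMmem.2)) hM₀le
  obtain ⟨g₀, hg₀⟩ : ∃ g, g ∉ M := by
    by_contra h
    push_neg at h
    exact hMtop (Subgroup.eq_top_iff' M |>.2 h)
  -- CM
  set CM := Subgroup.centralizer (M : Set G) with hCMdef
  have hxM : x ∈ M := hx ▸ CentAux.self_mem_cent x
  have hCMle : CM ≤ M := by
    rw [← hx]
    exact Subgroup.centralizer_le (Set.singleton_subset_iff.2 hxM)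
  have hZCM : Z ≤ CM := Subgroup.center_le_centralizer _
  have hKey : ∀ v : G, v ∈ CM → v ∉ Z → Subgroup.centralizer {v} = M := by
    intro v hv hvZ
    refine hMmax _ ⟨CentAux.cent_mem v, ?_⟩ ?_
    · simp only [Set.mem_singleton_iff]
      exact fun h => hvZ (CentAux.cent_eq_top_iff.1 h)
    · intro m hm
      rw [Subgroup.mem_centralizer_singleton_iff]
      exact (Subgroup.mem_centralizer_iff.1 hv) m hm
  -- image facts
  have himg : ∀ v : G, v ∈ CM →
      Subgroup.centralizer ({v * g₀} : Set G) ∈ centSet G ∧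
      Subgroup.centralizer ({v * g₀} : Set G) ≠ ⊤ ∧
      Subgroup.centralizer ({v * g₀} : Set G) ≠ M := by
    intro v hv
    have hvM : v ∈ M := hCMle hv
    refine ⟨CentAux.cent_mem _, ?_, ?_⟩
    · intro htop'
      have h1 : v * g₀ ∈ Z := CentAux.cent_eq_top_iff.1 htop'
      have h2 : v * g₀ ∈ M := (hZCM.trans hCMle) h1
      exact hg₀ (by simpa using M.mul_mem (M.inv_mem hvM) h2)
    · intro hM'
      have h2 : v * g₀ ∈ M := hM' ▸ CentAux.self_mem_cent (v * g₀)
      exact hg₀ (by simpa using M.mul_mem (M.inv_mem hvM) h2)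
  -- injectivity core
  have hinj : ∀ v w : G, v ∈ CM → w ∈ CM →
      Subgroup.centralizer ({v * g₀} : Set G) = Subgroup.centralizer ({w * g₀} : Set G) →
      v * w⁻¹ ∈ Z := by
    intro v w hv hw heq
    by_contra hns
    have hvw : v * w⁻¹ ∈ CM := CM.mul_mem hv (CM.inv_mem hw)
    have hMeq : Subgroup.centralizer {v * w⁻¹} = M := hKey _ hvw hns
    have hle : Subgroup.centralizer ({v * g₀} : Set G) ≤
        Subgroup.centralizer {v * w⁻¹} := by
      intro y hy
      have hy2 : y ∈ Subgroup.centralizer ({w * g₀} : Set G) := heq ▸ hy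
      rw [Subgroup.mem_centralizer_singleton_iff] at hy hy2 ⊢
      have c1 : Commute y (v * g₀) := hy
      have c2 : Commute y (w * g₀) := hy2
      have c3 : Commute y ((v * g₀) * (w * g₀)⁻¹) := c1.mul_right c2.inv_right
      have hrw : (v * g₀) * (w * g₀)⁻¹ = v * w⁻¹ := by group
      rw [hrw] at c3
      exact c3
    have hvg : v * g₀ ∈ M := hMeq ▸ hle (CentAux.self_mem_cent _)
    have hvM : v ∈ M := hCMle hv
    exact hg₀ (by simpa using M.mul_mem (M.inv_mem hvM) hvg)
  -- Lemma A : relIndex bound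
  have hrelA : Z.relIndex CM ≠ 0 ∧ Z.relIndex CM ≤ n - 2 := by
    set T : Set (Subgroup G) := S' \ {M} with hTdef
    have hTfin : T.Finite := hfinS'.diff
    have hTcard : T.ncard = n - 2 := by
      rw [hTdef, Set.ncard_diff_singleton_of_mem hMS', hncardS']
      omega
    set f : ↥CM → Subgroup G := fun v => Subgroup.centralizer {(v : G) * g₀} with hfdef
    have hwd : ∀ v w : ↥CM, QuotientGroup.leftRel (Z.subgroupOf CM) v w → f v = f w := by
      intro v w hvw
      rw [QuotientGroup.leftRel_apply] at hvw
      have hz : (v : G)⁻¹ * (w : G) ∈ Z := by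
        simpa [Subgroup.mem_subgroupOf] using hvw
      have hc := (Subgroup.mem_center_iff.1 hz) g₀
      have hwg : (w : G) * g₀ = ((v : G) * g₀) * ((v : G)⁻¹ * (w : G)) := by
        calc (w : G) * g₀ = ((v : G) * ((v : G)⁻¹ * (w : G))) * g₀ := by group
        _ = (v : G) * (((v : G)⁻¹ * (w : G)) * g₀) := by rw [mul_assoc]
        _ = (v : G) * (g₀ * ((v : G)⁻¹ * (w : G))) := by rw [← hc]
        _ = ((v : G) * g₀) * ((v : G)⁻¹ * (w : G)) := by rw [mul_assoc]
      show Subgroup.centralizer {(v : G) * g₀} = Subgroup.centralizer {(w : G) * g₀}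
      rw [hwg, CentAux.cent_mul_central hz]
    let Q := ↥CM ⧸ Z.subgroupOf CM
    let F : Q → Subgroup G := Quotient.lift f hwd
    have hmemT : ∀ q : Q, F q ∈ T := by
      apply Quotient.ind
      intro v
      obtain ⟨h1, h2, h3⟩ := himg (v : G) v.2
      exact ⟨⟨h1, fun hh => h2 hh⟩, fun hh => h3 hh⟩
    let F' : Q → ↥T := fun q => ⟨F q, hmemT q⟩
    have hF'inj : Function.Injective F' := by
      intro q₁ q₂ hq
      have hFq : F q₁ = F q₂ := congrArg Subtype.val hq
      revert hFq
      refine Quotient.inductionOn₂ q₁ q₂ ?_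
      intro v w hfvw
      have hvwZ : (v : G) * (w : G)⁻¹ ∈ Z := hinj _ _ v.2 w.2 hfvw
      have h2 : (w : G) * (v : G)⁻¹ ∈ Z := by
        have h2' := Z.inv_mem hvwZ
        simpa [mul_inv_rev] using h2'
      have hcv := (Subgroup.mem_center_iff.1 h2) (v : G)
      have h4 : (v : G) * ((w : G) * (v : G)⁻¹) = (w : G) := by
        rw [hcv]; group
      have h3 : ((v : G)⁻¹ * (w : G) : G) = (w : G) * (v : G)⁻¹ := by
        calc (v : G)⁻¹ * (w : G)
            = (v : G)⁻¹ * ((v : G) * ((w : G) * (v : G)⁻¹)) := by rw [h4]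
        _ = (w : G) * (v : G)⁻¹ := by group
      have hmem : v⁻¹ * w ∈ Z.subgroupOf CM := by
        rw [Subgroup.mem_subgroupOf]
        have hcoe : ((v⁻¹ * w : ↥CM) : G) = (v : G)⁻¹ * (w : G) := by simp
        rw [hcoe, h3]
        exact h2
      exact Quotient.sound (QuotientGroup.leftRel_apply.mpr hmem)
    haveI : Finite ↥T := hTfin.to_subtype
    haveI : Finite Q := Finite.of_injective F' hF'inj
    haveI : Nonempty Q := ⟨(1 : Q)⟩
    have hle := Nat.card_le_card_of_injective F' hF'inj
    have hTn : Nat.card ↥T = n - 2 := by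
      rw [Nat.card_coe_set_eq, hTcard]
    have hrel_eq : Z.relIndex CM = Nat.card Q := rfl
    constructor
    · rw [hrel_eq]
      exact Nat.card_ne_zero.2 ⟨inferInstance, inferInstance⟩
    · rw [hrel_eq, ← hTn]
      exact hle
  -- index = card of quotient
  have hQcard : Nat.card (G ⧸ Z) = Z.index := rfl
  by_cases habel : ∀ a b : G, a ∈ M → b ∈ M → a * b = b * a
  · -- M abelian
    have hMCM : M ≤ CM := fun m hm =>
      Subgroup.mem_centralizer_iff.2 (fun h hh => habel h m hh hm)
    have hCMeq : CM = M := le_antisymm hCMle hMCM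
    have hidx : Z.index = Z.relIndex M * M.index :=
      (Subgroup.relIndex_mul_index (hZCM.trans hCMle)).symm
    have hArel : Z.relIndex M ≠ 0 ∧ Z.relIndex M ≤ n - 2 := hCMeq ▸ hrelA
    constructor
    · exact ⟨by rw [hidx]; exact Nat.mul_ne_zero hArel.1 hMidx_ne⟩
    · rw [hQcard, hidx]
      have hfact : (n-1).factorial = (n-1) * (n-2).factorial := by
        have h1 : n - 1 = (n-2) + 1 := by omega
        rw [h1, Nat.factorial_succ, ← h1]
      calc Z.relIndex M * M.index ≤ (n-2) * (n-2) :=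
            Nat.mul_le_mul hArel.2 hMidx_le
        _ < (n-1) * (n-2) := by
            have h2 : 0 < n - 2 := by omega
            exact Nat.mul_lt_mul_of_lt_of_le (by omega) (le_refl _) h2
        _ ≤ (n-1) * (n-2).factorial :=
            Nat.mul_le_mul_left _ (Nat.self_le_factorial _)
        _ = (n-1).factorial := hfact.symm
  · -- M nonabelian
    push_neg at habel
    obtain ⟨a, b, haM, hbM, hab⟩ := habel
    have hMnc : ¬∀ p q : ↥M, p * q = q * p := by
      intro h
      exact hab (congrArg Subtype.val (h ⟨a, haM⟩ ⟨b, hbM⟩))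
    have hι : Function.Injective (Subgroup.map M.subtype) :=
      Subgroup.map_injective M.subtype_injective
    have hιcent : ∀ y : ↥M, Subgroup.map M.subtype (Subgroup.centralizer {y})
        = Subgroup.centralizer {(y : G)} ⊓ M := by
      intro y
      ext g
      simp only [Subgroup.mem_map, Subgroup.mem_inf]
      constructor
      · rintro ⟨m, hm, rfl⟩
        rw [Subgroup.mem_centralizer_singleton_iff] at hm
        constructor
        · rw [Subgroup.mem_centralizer_singleton_iff]
          have hcoe := congrArg Subtype.val hm
          simpa using hcoe
        · simpa using m.2
      · rintro ⟨hcomm, hgM⟩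
        refine ⟨⟨g, hgM⟩, ?_, rfl⟩
        rw [Subgroup.mem_centralizer_singleton_iff] at hcomm ⊢
        exact Subtype.ext (by simpa using hcomm)
    have hΦsub : (Subgroup.map M.subtype '' centSet ↥M) ⊆ (fun K => K ⊓ M) '' S' := by
      rintro _ ⟨K', ⟨y, rfl⟩, rfl⟩
      rw [hιcent]
      by_cases hy : Subgroup.centralizer {(y : G)} = ⊤
      · rw [hy]
        refine ⟨M, hMS', ?_⟩
        simp
      · exact ⟨_, ⟨CentAux.cent_mem _, by simp [hy]⟩, rfl⟩
    have hΦfin : (Subgroup.map M.subtype '' centSet ↥M).Finite :=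
      (hfinS'.image _).subset hΦsub
    have hfinM : (centSet ↥M).Finite :=
      Set.Finite.of_finite_image hΦfin hι.injOn
    have hnM_le : (centSet ↥M).ncard ≤ n - 2 := by
      by_contra hcon2
      push_neg at hcon2
      have h1 : ((fun K => K ⊓ M) '' S').ncard ≤ n - 1 :=
        hncardS' ▸ Set.ncard_image_le hfinS'
      have h2 : (Subgroup.map M.subtype '' centSet ↥M).ncard = (centSet ↥M).ncard :=
        Set.ncard_image_of_injective _ hι
      have h4 : (centSet ↥M).ncard ≤ n - 1 := by
        rw [← h2]
        exact le_trans (Set.ncard_le_ncard hΦsub (hfinS'.image _)) h1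
      have hΦeq : (Subgroup.map M.subtype '' centSet ↥M) = (fun K => K ⊓ M) '' S' :=
        Set.eq_of_subset_of_ncard_le hΦsub (by omega) (hfinS'.image _)
      have hinjOn : Set.InjOn (fun K => K ⊓ M) S' := by
        apply Set.injOn_of_ncard_image_eq _ hfinS'
        rw [← hΦeq]
        omega
      have hxCM : x ∈ CM := by
        rw [hCMdef, Subgroup.mem_centralizer_iff]
        intro m hm
        rw [SetLike.mem_coe, ← hx] at hm
        exact Subgroup.mem_centralizer_singleton_iff.1 hm
      obtain ⟨hK'c, hK'top, hK'M⟩ := himg x hxCM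
      have hK'S' : Subgroup.centralizer {x * g₀} ∈ S' := ⟨hK'c, fun hh => hK'top hh⟩
      have hK'Φ : (fun K => K ⊓ M) (Subgroup.centralizer {x * g₀})
          ∈ (Subgroup.map M.subtype '' centSet ↥M) :=
        hΦeq ▸ ⟨_, hK'S', rfl⟩
      obtain ⟨Ky', ⟨y', rfl⟩, hKyeq⟩ := hK'Φ
      rw [hιcent] at hKyeq
      have hKytop : Subgroup.centralizer {(y' : G)} ≠ ⊤ := by
        intro htop'
        rw [htop', top_inf_eq] at hKyeq
        have hMK' : M ≤ Subgroup.centralizer {x * g₀} :=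
          le_trans (le_of_eq hKyeq) inf_le_left
        exact hK'M (hMmax _ hK'S' hMK')
      have hKyS' : Subgroup.centralizer {(y' : G)} ∈ S' :=
        ⟨CentAux.cent_mem _, fun hh => hKytop hh⟩
      have hKyK' : Subgroup.centralizer {(y' : G)} = Subgroup.centralizer {x * g₀} :=
        hinjOn hKyS' hK'S' hKyeq
      have hxy' : x ∈ Subgroup.centralizer {x * g₀} := by
        rw [← hKyK', Subgroup.mem_centralizer_singleton_iff]
        exact ((Subgroup.mem_centralizer_iff.1 hxCM) _ y'.2).symm
      have hcomm := Subgroup.mem_centralizer_singleton_iff.1 hxy'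
      have h' : x * (x * g₀) = x * (g₀ * x) := by
        rw [hcomm, mul_assoc]
      have hg₀x : x * g₀ = g₀ * x := mul_left_cancel h'
      exact hg₀ (by rw [← hx, Subgroup.mem_centralizer_singleton_iff]; exact hg₀x.symm)
    have hnMlt : (centSet ↥M).ncard < n := by omega
    obtain ⟨hfinIdxM, hcardM⟩ := ih _ hnMlt ↥M hMnc hfinM rfl
    have hcenterM : Subgroup.center ↥M = CM.subgroupOf M := by
      ext m
      rw [Subgroup.mem_center_iff, Subgroup.mem_subgroupOf]
      constructor
      · intro h
        rw [hCMdef, Subgroup.mem_centralizer_iff]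
        intro g hg
        exact congrArg Subtype.val (h ⟨g, hg⟩)
      · intro h g
        exact Subtype.ext ((Subgroup.mem_centralizer_iff.1 h) (g : G) g.2)
    have hidxM : (Subgroup.center ↥M).index = CM.relIndex M := by
      rw [hcenterM]; rfl
    have hB_lt : CM.relIndex M < ((centSet ↥M).ncard - 1).factorial := by
      rw [← hidxM]
      exact hcardM
    have hBne : CM.relIndex M ≠ 0 := by
      rw [← hidxM]
      exact hfinIdxM.index_ne_zero
    have e1 : Z.index = Z.relIndex CM * CM.index :=
      (Subgroup.relIndex_mul_index hZCM).symm
    have e2 : CM.index = CM.relIndex M * M.index :=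
      (Subgroup.relIndex_mul_index hCMle).symm
    constructor
    · refine ⟨?_⟩
      rw [e1, e2]
      exact Nat.mul_ne_zero hrelA.1 (Nat.mul_ne_zero hBne hMidx_ne)
    · rw [hQcard, e1, e2]
      have hb' : CM.relIndex M < (n-3).factorial :=
        lt_of_lt_of_le hB_lt (Nat.factorial_le (by omega))
      have hfact3 : (n-1).factorial = (n-1) * ((n-2) * (n-3).factorial) := by
        have h1 : n - 1 = (n-2) + 1 := by omega
        have h2 : n - 2 = (n-3) + 1 := by omega
        calc (n-1).factorial = ((n-2)+1).factorial := by rw [← h1]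
        _ = ((n-2)+1) * (n-2).factorial := Nat.factorial_succ _
        _ = ((n-2)+1) * (((n-3)+1) * (n-3).factorial) := by
            rw [h2, Nat.factorial_succ]
        _ = (n-1) * ((n-2) * (n-3).factorial) := by rw [← h1, ← h2]
      calc Z.relIndex CM * (CM.relIndex M * M.index)
          ≤ (n-2) * (CM.relIndex M * (n-2)) :=
            Nat.mul_le_mul hrelA.2 (Nat.mul_le_mul_left _ hMidx_le)
      _ = CM.relIndex M * ((n-2) * (n-2)) := by ring
      _ < (n-3).factorial * ((n-2) * (n-2)) := by
          have hpos : 0 < (n-2) * (n-2) := Nat.mul_pos (by omega) (by omega)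
          exact Nat.mul_lt_mul_of_lt_of_le hb' (le_refl _) hpos
      _ ≤ (n-3).factorial * ((n-2) * (n-1)) := by
          apply Nat.mul_le_mul_left
          exact Nat.mul_le_mul_left _ (by omega)
      _ = (n-1) * ((n-2) * (n-3).factorial) := by ring
      _ = (n-1).factorial := hfact3.symm



/-- A non-abelian `n`-centralizer group satisfies `|G/Z(G)| < (n-1)!`. -/
theorem stmt13 (G : Type*) [Group G] (hG : ¬∀ a b : G, a * b = b * a) (n : ℕ)
    (hfin : (centSet G).Finite) (hcard : (centSet G).ncard = n) :
    (Subgroup.center G).FiniteIndex ∧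
      Nat.card (G ⧸ Subgroup.center G) < (n - 1).factorial :=
  main n G hG hfin hcard
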